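/- For every integer k ≥ 4, with ℓ = 3 and p0 = 2^{−3k}, p1 = 2^{−3k}·((k+1)^3 − 1), p2 = 1 − 2^{−3k}·(k+1)^3, and Q(k) = p1 + 2·√(p0·p2), one has 1/Q(k) > 2^k · ln 2 (equivalently Q(k) · 2^k · ln 2 < 1); i.e. the max-positives branch of the Threshold-Symmetric Hybrid rule with 3 choices certifies a satisfiability threshold strictly exceeding the first-moment bound 2^k ln 2. -/

import Mathlib

lemma aux_nat : ∀ k : ℕ, 4 ≤ k → 2 * (k + 1) ^ 3 ≤ 4 ^ k := by
  intro k hk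
  induction k with
  | zero => omega
  | succ n ih =>
    rcases Nat.lt_or_ge n 4 with h | h
    · have hn3 : n = 3 := by omega
      subst hn3; norm_num
    · have := ih (by omega)
      have h2 : 2 * (n + 2) ^ 3 ≤ 4 * (2 * (n + 1) ^ 3) := by
        have h1 : 1 ≤ n := by omega
        nlinarith [h1, sq_nonneg n, pow_pos (by omega : 0 < n) 3]
      calc 2 * (n + 1 + 1) ^ 3 ≤ 4 * (2 * (n + 1) ^ 3) := h2
        _ ≤ 4 * 4 ^ n := by omega
        _ = 4 ^ (n + 1) := by ring

theorem stmt3 (k : ℕ) (hk : 4 ≤ k) :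
    let p0 : ℝ := 2 ^ (-(3 * (k : ℤ)))
    let p1 : ℝ := 2 ^ (-(3 * (k : ℤ))) * (((k : ℝ) + 1) ^ 3 - 1)
    let p2 : ℝ := 1 - 2 ^ (-(3 * (k : ℤ))) * ((k : ℝ) + 1) ^ 3
    let Q : ℝ := p1 + 2 * Real.sqrt (p0 * p2)
    (2 : ℝ) ^ (k : ℕ) * Real.log 2 < 1 / Q ∧
      Q * ((2 : ℝ) ^ (k : ℕ) * Real.log 2) < 1 := by
  intro p0 p1 p2 Q
  have h2 : (0:ℝ) < 2 := two_pos
  have h2ne : (2:ℝ) ≠ 0 := by norm_num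
  have hp0 : (0:ℝ) < p0 := by positivity
  -- (k+1)^3 ≤ 2^(3k)
  have hk1 : (k : ℝ) + 1 ≤ 2 ^ k := by
    have : k < 2 ^ k := Nat.lt_two_pow_self
    have : (k : ℝ) + 1 ≤ ((2^k : ℕ) : ℝ) := by exact_mod_cast this
    simpa using this
  have hcube : ((k:ℝ)+1)^3 ≤ 2 ^ (3*k) := by
    calc ((k:ℝ)+1)^3 ≤ ((2:ℝ)^k)^3 := by
          apply pow_le_pow_left₀ (by positivity) hk1
      _ = 2 ^ (3*k) := by rw [← pow_mul]; ring_nf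
  have hzn : (2:ℝ) ^ (-(3*(k:ℤ))) = ((2:ℝ) ^ (3*k))⁻¹ := by
    rw [zpow_neg]
    norm_cast
  have h3kpos : (0:ℝ) < 2 ^ (3*k) := by positivity
  have hp2 : 0 ≤ p2 := by
    simp only [p2, hzn, sub_nonneg]
    rw [inv_mul_le_iff₀ h3kpos]
    simpa using hcube
  have hp2le : p2 ≤ 1 := by
    simp only [p2]
    have : 0 ≤ (2:ℝ) ^ (-(3*(k:ℤ))) * ((k:ℝ)+1)^3 := by positivity
    linarith
  -- sqrt bound
  have hsq : Real.sqrt (p0 * p2) ≤ (2:ℝ) ^ (-((k:ℤ)+2)) := by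
    have hb : p0 * p2 ≤ ((2:ℝ) ^ (-((k:ℤ)+2))) ^ 2 := by
      have h1 : p0 * p2 ≤ p0 := by
        calc p0 * p2 ≤ p0 * 1 := by
              apply mul_le_mul_of_nonneg_left hp2le (le_of_lt hp0)
          _ = p0 := mul_one _
      have h2' : p0 ≤ ((2:ℝ) ^ (-((k:ℤ)+2))) ^ 2 := by
        have : ((2:ℝ) ^ (-((k:ℤ)+2))) ^ 2 = (2:ℝ) ^ ((-((k:ℤ)+2)) * 2) := by
          rw [← zpow_natCast ((2:ℝ) ^ (-((k:ℤ)+2))) 2, ← zpow_mul]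
          norm_num
        rw [this]
        apply zpow_le_zpow_right₀ (by norm_num)
        omega
      linarith
    calc Real.sqrt (p0 * p2) ≤ Real.sqrt (((2:ℝ) ^ (-((k:ℤ)+2))) ^ 2) :=
          Real.sqrt_le_sqrt hb
      _ = (2:ℝ) ^ (-((k:ℤ)+2)) := Real.sqrt_sq (by positivity)
  -- p1 * 2^k ≤ 1/2
  have h4k : 2 * ((k:ℝ) + 1) ^ 3 ≤ 4 ^ k := by
    have := aux_nat k hk
    have : ((2 * (k+1)^3 : ℕ) : ℝ) ≤ ((4^k : ℕ) : ℝ) := by exact_mod_cast this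
    push_cast at this
    linarith
  have hp1bound : p1 * 2 ^ k ≤ 1/2 := by
    have key : (2:ℝ) ^ (-(3*(k:ℤ))) * 2 ^ k = ((2:ℝ) ^ (2*k))⁻¹ := by
      rw [hzn, show 3*k = 2*k + k by ring, pow_add, mul_inv, mul_assoc,
        inv_mul_cancel₀ (by positivity : ((2:ℝ)^k) ≠ 0), mul_one]
    have h4eq : (4:ℝ) ^ k = (2:ℝ) ^ (2*k) := by
      rw [pow_mul]; norm_num
    have : p1 * 2 ^ k = ((2:ℝ) ^ (2*k))⁻¹ * (((k:ℝ)+1)^3 - 1) := by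
      simp only [p1]; rw [mul_right_comm, key]
    rw [this, inv_mul_le_iff₀ (by positivity)]
    rw [h4eq] at h4k
    nlinarith
  -- sqrt term * 2^k ≤ 1/2
  have hsqbound : 2 * Real.sqrt (p0 * p2) * 2 ^ k ≤ 1/2 := by
    have key : (2:ℝ) * (2:ℝ) ^ (-((k:ℤ)+2)) * 2 ^ k = 1/2 := by
      rw [show (2:ℝ) ^ k = (2:ℝ)^(k:ℤ) from (zpow_natCast 2 k).symm,
          show (2:ℝ) * (2:ℝ) ^ (-((k:ℤ)+2)) = (2:ℝ)^(1:ℤ) * (2:ℝ) ^ (-((k:ℤ)+2)) by norm_num,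
          ← zpow_add₀ h2ne, ← zpow_add₀ h2ne,
          show (1:ℤ) + -((k:ℤ)+2) + (k:ℤ) = -1 by ring]
      norm_num
    calc 2 * Real.sqrt (p0 * p2) * 2 ^ k ≤ 2 * ((2:ℝ) ^ (-((k:ℤ)+2))) * 2 ^ k := by
          have : (0:ℝ) < 2 ^ k := by positivity
          nlinarith [hsq]
      _ = 1/2 := key
  have hQ2k : Q * 2 ^ k ≤ 1 := by
    have : Q * 2 ^ k = p1 * 2 ^ k + 2 * Real.sqrt (p0 * p2) * 2 ^ k := by
      simp only [Q]; ring
    rw [this]; linarith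
  have hQpos : 0 < Q := by
    have hp1pos : 0 < p1 := by
      have : (1:ℝ) < ((k:ℝ)+1)^3 := by
        have h4 : (4:ℝ) ≤ (k:ℝ) := by exact_mod_cast hk
        nlinarith [h4, sq_nonneg ((k:ℝ)+1)]
      simp only [p1]
      exact mul_pos hp0 (by linarith)
    have : 0 ≤ Real.sqrt (p0 * p2) := Real.sqrt_nonneg _
    simp only [Q]; linarith
  have hln : Real.log 2 < 1 := by
    have := Real.log_two_lt_d9
    linarith
  have hlnpos : 0 < Real.log 2 := Real.log_pos (by norm_num)
  have hmain : Q * ((2:ℝ) ^ k * Real.log 2) < 1 := by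
    have h1 : Q * ((2:ℝ) ^ k * Real.log 2) = (Q * 2 ^ k) * Real.log 2 := by ring
    rw [h1]
    calc (Q * 2 ^ k) * Real.log 2 ≤ 1 * Real.log 2 := by
          apply mul_le_mul_of_nonneg_right hQ2k (le_of_lt hlnpos)
      _ = Real.log 2 := one_mul _
      _ < 1 := hln
  refine ⟨?_, hmain⟩
  rw [lt_div_iff₀ hQpos]
  nlinarith [hmain]
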